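/- arXiv:2202.00633 — 3 statements merged into one kernel-verified Lean document; each statement's English description precedes it below -/
import Mathlib

section
/- In a two-player zero-sum game, let (π^e, σ^e) be a Nash equilibrium of the game (Δ(Π_i), Δ^e) and (π^{e+1}, σ^{e+1}) a Nash equilibrium of (Δ(Π_i), Δ^{e+1}), where Δ^e ⊆ Δ^{e+1} are two sets of opponent mixed strategies. Then u_i(π^e, σ^e) − u_i(π^e, σ^{e+1}) ≥ 0. -/
/-- Monotonic policy space expanding: utility against the epoch-(e+1) equilibrium
meta-strategy does not exceed utility against the epoch-e one. -/
theorem monotonic_policy_space_expanding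
    {X Y : Type*} (u : X → Y → ℝ) (A : Set X) (De De1 : Set Y)
    (hsub : De ⊆ De1)
    (πe πe1 : X) (σe σe1 : Y)
    (hπe : πe ∈ A) (hσe : σe ∈ De) (hπe1 : πe1 ∈ A) (hσe1 : σe1 ∈ De1)
    (hNe1 : ∀ π ∈ A, u π σe ≤ u πe σe)
    (hNe2 : ∀ σ ∈ De, u πe σe ≤ u πe σ)
    (hNe11 : ∀ π ∈ A, u π σe1 ≤ u πe1 σe1)
    (hNe12 : ∀ σ ∈ De1, u πe1 σe1 ≤ u πe1 σ) :
    u πe σe - u πe σe1 ≥ 0 := by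
  have h1 := hNe11 πe hπe
  have h2 := hNe12 σe (hsub hσe)
  have h3 := hNe1 πe1 hπe1
  linarith
end

section
/- With the setup of the monotonic expansion theorem, if additionally u_i(π^e, σ^e) − u_i(π^e, σ^{e+1}) > 0, then σ^{e+1} ∉ Δ^e, i.e., the restricted policy set has strictly expanded. -/
/-- Strict expansion: if the utility strictly drops against the new equilibrium
meta-strategy, then the new meta-strategy lies outside the old restricted simplex. -/
theorem strict_policy_space_expanding
    {X Y : Type*} (u : X → Y → ℝ) (A : Set X) (De De1 : Set Y)
    (hsub : De ⊆ De1)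
    (πe πe1 : X) (σe σe1 : Y)
    (hπe : πe ∈ A) (hσe : σe ∈ De) (hπe1 : πe1 ∈ A) (hσe1 : σe1 ∈ De1)
    (hNe1 : ∀ π ∈ A, u π σe ≤ u πe σe)
    (hNe2 : ∀ σ ∈ De, u πe σe ≤ u πe σ)
    (hNe11 : ∀ π ∈ A, u π σe1 ≤ u πe1 σe1)
    (hNe12 : ∀ σ ∈ De1, u πe1 σe1 ≤ u πe1 σ)
    (hstrict : u πe σe - u πe σe1 > 0) :
    σe1 ∉ De := by
  intro h
  have := hNe2 σe1 h
  linarith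
end

section
/- In a finite two-player zero-sum game with payoff matrix U for the row player, the NashConv of EPSRO-style equilibrium pairs is at most that of PSRO: if (π*_i, σ*_{-i}) is a Nash equilibrium of the unrestricted-restricted game (Δ(Π_i), Δ(Π^r_{-i})) and (σ*_i, π*_{-i}) is a Nash equilibrium of (Δ(Π^r_i), Δ(Π_{-i})), and (σ_i, σ_{-i}) is any pair of restricted-game strategies with σ_i ∈ Δ(Π^r_i), σ_{-i} ∈ Δ(Π^r_{-i}), then u_i(π*_i, σ*_{-i}) − u_i(σ*_i, π*_{-i}) ≤ max_{π_i ∈ Δ(Π_i)} u_i(π_i, σ_{-i}) − min_{π_{-i} ∈ Δ(Π_{-i})} u_i(σ_i, π_{-i}). -/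
/-- EPSRO-style NashConv is at most PSRO-style NashConv. -/
theorem epsro_nashconv_le_psro
    {X Y : Type*} (u : X → Y → ℝ)
    (Di Dri : Set X) (Dj Drj : Set Y)
    (hri : Dri ⊆ Di) (hrj : Drj ⊆ Dj)
    (πistar : X) (σjstar : Y) (σistar : X) (πjstar : Y)
    (hπistar : πistar ∈ Di) (hσjstar : σjstar ∈ Drj)
    (hσistar : σistar ∈ Dri) (hπjstar : πjstar ∈ Dj)
    -- (π*_i, σ*_{-i}) is a Nash equilibrium of the URR game (Δ(Π_i), Δ(Π^r_{-i}))
    (h1 : ∀ π ∈ Di, u π σjstar ≤ u πistar σjstar)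
    (h2 : ∀ σ ∈ Drj, u πistar σjstar ≤ u πistar σ)
    -- (σ*_i, π*_{-i}) is a Nash equilibrium of (Δ(Π^r_i), Δ(Π_{-i}))
    (h3 : ∀ π ∈ Dri, u π πjstar ≤ u σistar πjstar)
    (h4 : ∀ σ ∈ Dj, u σistar πjstar ≤ u σistar σ)
    -- an arbitrary pair of restricted-game strategies with their best responses
    (σi : X) (σj : Y) (hσi : σi ∈ Dri) (hσj : σj ∈ Drj)
    (πBRi : X) (hπBRi : πBRi ∈ Di) (hmax : ∀ π ∈ Di, u π σj ≤ u πBRi σj)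
    (πBRj : Y) (hπBRj : πBRj ∈ Dj) (hmin : ∀ σ ∈ Dj, u σi πBRj ≤ u σi σ) :
    u πistar σjstar - u σistar πjstar ≤ u πBRi σj - u σi πBRj := by
  have a := h2 σj hσj
  have b := hmax πistar hπistar
  have c := hmin πjstar hπjstar
  have d := h3 σi hσi
  linarith
end
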